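/- Let F be a field, n, m ≥ 1, 1 ≤ i ≤ n, and t ∈ F. Let x^{Sp}_{2e_i}(t) = I + t·E_{i,2n+1−i} in M_{2n}(F) be a symplectic Chevalley generator, and let x^{(4nm)}_{e_a+e_b}(t) denote orthogonal Chevalley generators in M_{4nm}(F). Let P be the 4nm×4nm block-diagonal matrix whose first n diagonal 2m×2m blocks equal J = [[I_m, 0], [0, −Ω_m]] and whose last n diagonal 2m×2m blocks equal K = [[Ω_m, 0], [0, I_m]]. Then, under the lexicographic identification of Kronecker products, P⁻¹ · (x^{Sp}_{2e_i}(t) ⊗ I_{2m}) · P = ∏_{k=1}^{m} x^{(4nm)}_{e_{2m(i−1)+k} + e_{2m(i−1)+m+k}}(t), the factors on the right pairwise commuting. (This is the formula for the image ρ_SP(x_{2e_i}(t), I) of the conjugated Kronecker tensor product map Sp_{2n} × Sp_{2m} → SO_{4nm}.) -/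

import Mathlib

open Matrix

/-- The `d × d` exchange matrix `Ω_d`: entry 1 exactly when (1-based) `i + j = d + 1`. -/
def omegaMat (F : Type*) [CommRing F] (d : ℕ) : Matrix (Fin d) (Fin d) F :=
  fun i j => if (i : ℕ) + (j : ℕ) + 1 = d then 1 else 0

/-- `SO_d(F)`: the set of `d × d` matrices with `A · Ω_d · Aᵀ = Ω_d` and `det A = 1`. -/
def SOset (F : Type*) [CommRing F] (d : ℕ) : Set (Matrix (Fin d) (Fin d) F) :=
  {A | A * omegaMat F d * Aᵀ = omegaMat F d ∧ A.det = 1}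

/-- `Ψ_{2n} = [[0, Ω_n], [−Ω_n, 0]]`. -/
def PsiMat (F : Type*) [CommRing F] (n : ℕ) : Matrix (Fin (2*n)) (Fin (2*n)) F :=
  fun i j => if (i : ℕ) + (j : ℕ) + 1 = 2*n then (if (i : ℕ) < n then 1 else -1) else 0

/-- `Sp_{2n}(F)`: the set of `2n × 2n` matrices with `A · Ψ_{2n} · Aᵀ = Ψ_{2n}`. -/
def SpSet (F : Type*) [CommRing F] (n : ℕ) : Set (Matrix (Fin (2*n)) (Fin (2*n)) F) :=
  {A | A * PsiMat F n * Aᵀ = PsiMat F n}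

/-- Kronecker product, regarded as an `(nm) × (nm)` matrix via the lexicographic
identification sending the (1-based) pair `(i,k)` to `m(i−1)+k`. -/
def kron {F : Type*} [CommRing F] {n m : ℕ} (A : Matrix (Fin n) (Fin n) F)
    (B : Matrix (Fin m) (Fin m) F) : Matrix (Fin (n*m)) (Fin (n*m)) F :=
  Matrix.reindex finProdFinEquiv finProdFinEquiv (Matrix.kroneckerMap (· * ·) A B)

/-- 1-based matrix unit `E_{i,j}` in `M_d(F)`. -/
def Eunit (F : Type*) [CommRing F] (d : ℕ) (i j : ℕ) : Matrix (Fin d) (Fin d) F :=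
  fun p q => if (p : ℕ) + 1 = i ∧ (q : ℕ) + 1 = j then 1 else 0

/-- Symplectic Chevalley generator `x_{e_i−e_j}(t) = I + t(E_{i,j} − E_{2n+1−j,2n+1−i})`. -/
def xCsub (F : Type*) [CommRing F] (n i j : ℕ) (t : F) : Matrix (Fin (2*n)) (Fin (2*n)) F :=
  1 + t • (Eunit F (2*n) i j - Eunit F (2*n) (2*n+1-j) (2*n+1-i))

/-- Symplectic Chevalley generator `x_{e_i+e_j}(t) = I + t(E_{i,2n+1−j} + E_{j,2n+1−i})`. -/
def xCadd (F : Type*) [CommRing F] (n i j : ℕ) (t : F) : Matrix (Fin (2*n)) (Fin (2*n)) F :=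
  1 + t • (Eunit F (2*n) i (2*n+1-j) + Eunit F (2*n) j (2*n+1-i))

/-- Symplectic Chevalley generator `x_{2e_j}(t) = I + t·E_{j,2n+1−j}`. -/
def xClong (F : Type*) [CommRing F] (n j : ℕ) (t : F) : Matrix (Fin (2*n)) (Fin (2*n)) F :=
  1 + t • Eunit F (2*n) j (2*n+1-j)

/-- Signed symplectic generator `x_{a₁e_i + a₂e_j}(t)` for `i < j` and `a₁, a₂ ∈ {1,−1}`,
using the convention `x_{−α}(t) = x_α(t)ᵀ`. -/
def xCs (F : Type*) [CommRing F] (n i j : ℕ) (a₁ a₂ : ℤ) (t : F) :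
    Matrix (Fin (2*n)) (Fin (2*n)) F :=
  if a₁ = 1 then (if a₂ = 1 then xCadd F n i j t else xCsub F n i j t)
  else (if a₂ = 1 then (xCsub F n i j t)ᵀ else (xCadd F n i j t)ᵀ)

/-- Signed symplectic generator `x_{2a e_j}(t)` for `a ∈ {1,−1}`. -/
def xCls (F : Type*) [CommRing F] (n j : ℕ) (a : ℤ) (t : F) :
    Matrix (Fin (2*n)) (Fin (2*n)) F :=
  if a = 1 then xClong F n j t else (xClong F n j t)ᵀ

/-- Orthogonal Chevalley generator `x_{e_i−e_j}(t) = I + t(E_{i,j} − E_{d+1−j,d+1−i})`. -/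
def xDsub (F : Type*) [CommRing F] (d i j : ℕ) (t : F) : Matrix (Fin d) (Fin d) F :=
  1 + t • (Eunit F d i j - Eunit F d (d+1-j) (d+1-i))

/-- Orthogonal Chevalley generator `x_{e_i+e_j}(t) = I + t(E_{i,d+1−j} − E_{j,d+1−i})`. -/
def xDadd (F : Type*) [CommRing F] (d i j : ℕ) (t : F) : Matrix (Fin d) (Fin d) F :=
  1 + t • (Eunit F d i (d+1-j) - Eunit F d j (d+1-i))

/-- Signed orthogonal generator `x_{a₁e_i + a₂e_j}(t)` in `M_d(F)`, for `i < j` and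
`a₁, a₂ ∈ {1,−1}`, with the convention `x_{−α}(t) = x_α(t)ᵀ`. -/
def xDs (F : Type*) [CommRing F] (d i j : ℕ) (a₁ a₂ : ℤ) (t : F) :
    Matrix (Fin d) (Fin d) F :=
  if a₁ = 1 then (if a₂ = 1 then xDadd F d i j t else xDsub F d i j t)
  else (if a₂ = 1 then (xDsub F d i j t)ᵀ else (xDadd F d i j t)ᵀ)

/-- Short orthogonal Chevalley generator
`x_{e_j}(t) = I + s·t·E_{j,n+1} − s·t·E_{n+1,2n+2−j} − t²·E_{j,2n+2−j}` in `M_{2n+1}(F)`,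
where `s² = 2`. -/
def xBshort (F : Type*) [CommRing F] (n : ℕ) (s : F) (j : ℕ) (t : F) :
    Matrix (Fin (2*n+1)) (Fin (2*n+1)) F :=
  1 + (s*t) • Eunit F (2*n+1) j (n+1) - (s*t) • Eunit F (2*n+1) (n+1) (2*n+2-j)
    - (t^2) • Eunit F (2*n+1) j (2*n+2-j)

/-- Signed short orthogonal generator `x_{a e_j}(t)` for `a ∈ {1,−1}`. -/
def xBs (F : Type*) [CommRing F] (n : ℕ) (s : F) (j : ℕ) (a : ℤ) (t : F) :
    Matrix (Fin (2*n+1)) (Fin (2*n+1)) F :=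
  if a = 1 then xBshort F n s j t else (xBshort F n s j t)ᵀ

/-- The commutator `(g,h) = g·h·g⁻¹·h⁻¹`. -/
noncomputable def mcomm {F : Type*} [Field F] {d : ℕ} (g h : Matrix (Fin d) (Fin d) F) :
    Matrix (Fin d) (Fin d) F :=
  g * h * g⁻¹ * h⁻¹

/-- Entry function (0-based) of the `2m × 2m` block `J = [[I_m, 0], [0, −Ω_m]]`. -/
def Jent (F : Type*) [CommRing F] (m r c : ℕ) : F :=
  if r < m ∧ c < m then (if r = c then 1 else 0)
  else if m ≤ r ∧ m ≤ c then (if r + c + 1 = 3*m then -1 else 0)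
  else 0

/-- Entry function (0-based) of the `2m × 2m` block `K = [[Ω_m, 0], [0, I_m]]`. -/
def Kent (F : Type*) [CommRing F] (m r c : ℕ) : F :=
  if r < m ∧ c < m then (if r + c + 1 = m then 1 else 0)
  else if m ≤ r ∧ m ≤ c then (if r = c then 1 else 0)
  else 0

/-- The `4nm × 4nm` block-diagonal matrix `P` whose first `n` diagonal `2m × 2m` blocks
equal `J` and whose last `n` diagonal blocks equal `K`. -/
def Pmat (F : Type*) [CommRing F] (n m : ℕ) :
    Matrix (Fin ((2*n)*(2*m))) (Fin ((2*n)*(2*m))) F :=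
  fun p q =>
    if (p : ℕ) / (2*m) = (q : ℕ) / (2*m) then
      (if (p : ℕ) / (2*m) < n then Jent F m ((p : ℕ) % (2*m)) ((q : ℕ) % (2*m))
       else Kent F m ((p : ℕ) % (2*m)) ((q : ℕ) % (2*m)))
    else 0

section Aux

variable {F : Type*} [Field F]

lemma divNat_val {a b : ℕ} (p : Fin (a*b)) : ((p.divNat : Fin a) : ℕ) = (p : ℕ) / b := rfl

lemma modNat_val {a b : ℕ} (p : Fin (a*b)) : ((p.modNat : Fin b) : ℕ) = (p : ℕ) % b := rfl

lemma kron_apply {n m : ℕ} (A : Matrix (Fin n) (Fin n) F) (B : Matrix (Fin m) (Fin m) F)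
    (p q : Fin (n*m)) : kron A B p q = A p.divNat q.divNat * B p.modNat q.modNat := rfl

lemma kron_mul {n m : ℕ} (A C : Matrix (Fin n) (Fin n) F) (B D : Matrix (Fin m) (Fin m) F) :
    kron A B * kron C D = kron (A*C) (B*D) := by
  unfold kron
  rw [Matrix.reindex_apply, Matrix.reindex_apply, Matrix.reindex_apply,
    Matrix.submatrix_mul_equiv, Matrix.mul_kronecker_mul]

lemma kron_one_one {n m : ℕ} :
    kron (1 : Matrix (Fin n) (Fin n) F) (1 : Matrix (Fin m) (Fin m) F) = 1 := by
  unfold kron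
  rw [Matrix.one_kronecker_one, Matrix.reindex_apply, Matrix.submatrix_one_equiv]

lemma kron_add_left {n m : ℕ} (A B : Matrix (Fin n) (Fin n) F) (C : Matrix (Fin m) (Fin m) F) :
    kron (A + B) C = kron A C + kron B C := by
  ext p q; simp [kron_apply, Matrix.add_apply, add_mul]

lemma kron_smul_left {n m : ℕ} (t : F) (A : Matrix (Fin n) (Fin n) F)
    (C : Matrix (Fin m) (Fin m) F) : kron (t • A) C = t • kron A C := by
  ext p q; simp only [kron_apply, Matrix.smul_apply, smul_eq_mul]; ring

lemma kron_zero_left {n m : ℕ} (C : Matrix (Fin m) (Fin m) F) :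
    kron (0 : Matrix (Fin n) (Fin n) F) C = 0 := by
  ext p q; simp [kron_apply]

lemma kron_sub_right {n m : ℕ} (A : Matrix (Fin n) (Fin n) F) (B C : Matrix (Fin m) (Fin m) F) :
    kron A (B - C) = kron A B - kron A C := by
  ext p q; simp [kron_apply, Matrix.sub_apply, mul_sub]

lemma kron_sum_right {n m : ℕ} (A : Matrix (Fin n) (Fin n) F) {s : Finset ℕ}
    (B : ℕ → Matrix (Fin m) (Fin m) F) :
    kron A (∑ k ∈ s, B k) = ∑ k ∈ s, kron A (B k) := by
  ext p q; simp [kron_apply, Matrix.sum_apply, Finset.mul_sum]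

lemma Eunit_mul_ne {d : ℕ} {a b c e : ℕ} (h : b ≠ c) :
    Eunit F d a b * Eunit F d c e = 0 := by
  ext p q
  rw [Matrix.mul_apply]
  apply Finset.sum_eq_zero
  intro s _
  simp only [Eunit]
  split_ifs <;> (try ring) <;> (exfalso; omega)

lemma div_mod_char {M x u v : ℕ} (hM : 0 < M) (hu : 1 ≤ u) (hv : 1 ≤ v) (hv' : v ≤ M) :
    (x / M + 1 = u ∧ x % M + 1 = v) ↔ x + 1 = M*(u-1) + v := by
  constructor
  · rintro ⟨h1, h2⟩
    have d1 : x / M = u - 1 := by omega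
    have h3 := Nat.div_add_mod x M
    rw [d1] at h3
    omega
  · intro h
    have hx : x = M*(u-1) + (v-1) := by omega
    have hd : x / M = u - 1 := by
      rw [hx, Nat.mul_add_div hM, Nat.div_eq_of_lt (by omega)]
      omega
    have hmo : x % M = v - 1 := by
      rw [hx, Nat.mul_add_mod, Nat.mod_eq_of_lt (by omega)]
    omega

lemma kron_Eunit {n m : ℕ} (hm : 1 ≤ m) {a b k l : ℕ}
    (ha : 1 ≤ a) (hb : 1 ≤ b) (hk : 1 ≤ k) (hk' : k ≤ 2*m) (hl : 1 ≤ l) (hl' : l ≤ 2*m) :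
    kron (Eunit F (2*n) a b) (Eunit F (2*m) k l)
      = Eunit F ((2*n)*(2*m)) (2*m*(a-1)+k) (2*m*(b-1)+l) := by
  ext p q
  rw [kron_apply]
  simp only [Eunit]
  have hp := div_mod_char (M := 2*m) (x := (p:ℕ)) (by omega) ha hk hk'
  have hq := div_mod_char (M := 2*m) (x := (q:ℕ)) (by omega) hb hl hl'
  split_ifs <;> (try ring) <;> (simp only [divNat_val, modNat_val] at *; exfalso; tauto)

end Aux

def Jm (F : Type*) [Field F] (m : ℕ) : Matrix (Fin (2*m)) (Fin (2*m)) F :=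
  fun r c => Jent F m r c

def Km (F : Type*) [Field F] (m : ℕ) : Matrix (Fin (2*m)) (Fin (2*m)) F :=
  fun r c => Kent F m r c

def Mm (F : Type*) [Field F] (m : ℕ) : Matrix (Fin (2*m)) (Fin (2*m)) F :=
  fun r c => if (r:ℕ) < m ∧ (c:ℕ) < m ∧ (r:ℕ)+(c:ℕ)+1 = m then 1
    else if m ≤ (r:ℕ) ∧ m ≤ (c:ℕ) ∧ (r:ℕ)+(c:ℕ)+1 = 3*m then -1 else 0

def Q1mat (F : Type*) [Field F] (n : ℕ) : Matrix (Fin (2*n)) (Fin (2*n)) F :=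
  Matrix.diagonal (fun a => if (a:ℕ) < n then 1 else 0)

def Q2mat (F : Type*) [Field F] (n : ℕ) : Matrix (Fin (2*n)) (Fin (2*n)) F :=
  Matrix.diagonal (fun a => if (a:ℕ) < n then 0 else 1)

section Aux2

variable {F : Type*} [Field F]

lemma JJ {m : ℕ} : Jm F m * Jm F m = 1 := by
  ext r c
  rw [Matrix.mul_apply]
  by_cases hr : (r:ℕ) < m
  · rw [Finset.sum_eq_single (⟨(r:ℕ), by omega⟩ : Fin (2*m))]
    · simp only [Jm, Jent, Matrix.one_apply, Fin.ext_iff, true_and, and_true]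
      split_ifs <;> (try ring) <;> (exfalso; omega)
    · intro b _ hb
      have hb' : (b:ℕ) ≠ (r:ℕ) := fun h => hb (Fin.ext h)
      simp only [Jm, Jent]
      split_ifs <;> (try ring) <;> (exfalso; omega)
    · intro h; exact absurd (Finset.mem_univ _) h
  · have hr2 : (r:ℕ) < 2*m := r.2
    rw [Finset.sum_eq_single (⟨3*m-1-(r:ℕ), by omega⟩ : Fin (2*m))]
    · simp only [Jm, Jent, Matrix.one_apply, Fin.ext_iff, true_and, and_true]
      split_ifs <;> (try ring) <;> (exfalso; omega)
    · intro b _ hb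
      have hb' : (b:ℕ) ≠ 3*m-1-(r:ℕ) := fun h => hb (Fin.ext h)
      simp only [Jm, Jent]
      split_ifs <;> (try ring) <;> (exfalso; omega)
    · intro h; exact absurd (Finset.mem_univ _) h

lemma KK {m : ℕ} : Km F m * Km F m = 1 := by
  ext r c
  rw [Matrix.mul_apply]
  by_cases hr : (r:ℕ) < m
  · rw [Finset.sum_eq_single (⟨m-1-(r:ℕ), by omega⟩ : Fin (2*m))]
    · simp only [Km, Kent, Matrix.one_apply, Fin.ext_iff, true_and, and_true]
      split_ifs <;> (try ring) <;> (exfalso; omega)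
    · intro b _ hb
      have hb' : (b:ℕ) ≠ m-1-(r:ℕ) := fun h => hb (Fin.ext h)
      simp only [Km, Kent]
      split_ifs <;> (try ring) <;> (exfalso; omega)
    · intro h; exact absurd (Finset.mem_univ _) h
  · have hr2 : (r:ℕ) < 2*m := r.2
    rw [Finset.sum_eq_single (⟨(r:ℕ), by omega⟩ : Fin (2*m))]
    · simp only [Km, Kent, Matrix.one_apply, Fin.ext_iff, true_and, and_true]
      split_ifs <;> (try ring) <;> (exfalso; omega)
    · intro b _ hb
      have hb' : (b:ℕ) ≠ (r:ℕ) := fun h => hb (Fin.ext h)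
      simp only [Km, Kent]
      split_ifs <;> (try ring) <;> (exfalso; omega)
    · intro h; exact absurd (Finset.mem_univ _) h

lemma JK {m : ℕ} : Jm F m * Km F m = Mm F m := by
  ext r c
  rw [Matrix.mul_apply]
  by_cases hr : (r:ℕ) < m
  · rw [Finset.sum_eq_single (⟨(r:ℕ), by omega⟩ : Fin (2*m))]
    · simp only [Jm, Jent, Km, Kent, Mm, true_and, and_true]
      split_ifs <;> (try ring) <;> (exfalso; omega)
    · intro b _ hb
      have hb' : (b:ℕ) ≠ (r:ℕ) := fun h => hb (Fin.ext h)
      simp only [Jm, Jent, Km, Kent, true_and, and_true]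
      split_ifs <;> (try ring) <;> (exfalso; omega)
    · intro h; exact absurd (Finset.mem_univ _) h
  · have hr2 : (r:ℕ) < 2*m := r.2
    rw [Finset.sum_eq_single (⟨3*m-1-(r:ℕ), by omega⟩ : Fin (2*m))]
    · simp only [Jm, Jent, Km, Kent, Mm, true_and, and_true]
      split_ifs <;> (try ring) <;> (exfalso; omega)
    · intro b _ hb
      have hb' : (b:ℕ) ≠ 3*m-1-(r:ℕ) := fun h => hb (Fin.ext h)
      simp only [Jm, Jent, Km, Kent, true_and, and_true]
      split_ifs <;> (try ring) <;> (exfalso; omega)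
    · intro h; exact absurd (Finset.mem_univ _) h

lemma Pmat_eq {n m : ℕ} (hn : 1 ≤ n) (hm : 1 ≤ m) :
    Pmat F n m = kron (Q1mat F n) (Jm F m) + kron (Q2mat F n) (Km F m) := by
  ext p q
  simp only [Pmat, Matrix.add_apply, kron_apply, Q1mat, Q2mat, Matrix.diagonal_apply,
    Jm, Km, Jent, Kent, Fin.ext_iff]
  split_ifs <;> (try ring) <;> (simp only [divNat_val, modNat_val] at *; exfalso; omega)

lemma PP {n m : ℕ} (hn : 1 ≤ n) (hm : 1 ≤ m) : Pmat F n m * Pmat F n m = 1 := by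
  rw [Pmat_eq hn hm, add_mul, mul_add, mul_add, kron_mul, kron_mul, kron_mul, kron_mul]
  have q11 : Q1mat F n * Q1mat F n = Q1mat F n := by
    rw [Q1mat, Matrix.diagonal_mul_diagonal]
    rw [show (fun a : Fin (2*n) => (if (a:ℕ) < n then (1:F) else 0) * (if (a:ℕ) < n then 1 else 0))
      = fun a : Fin (2*n) => if (a:ℕ) < n then (1:F) else 0 by funext a; split_ifs <;> ring]
  have q12 : Q1mat F n * Q2mat F n = 0 := by
    rw [Q1mat, Q2mat, Matrix.diagonal_mul_diagonal]
    rw [show (fun a : Fin (2*n) => (if (a:ℕ) < n then (1:F) else 0) * (if (a:ℕ) < n then 0 else 1))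
      = fun _ => (0:F) by funext a; split_ifs <;> ring]
    exact Matrix.diagonal_zero
  have q21 : Q2mat F n * Q1mat F n = 0 := by
    rw [Q1mat, Q2mat, Matrix.diagonal_mul_diagonal]
    rw [show (fun a : Fin (2*n) => (if (a:ℕ) < n then (0:F) else 1) * (if (a:ℕ) < n then 1 else 0))
      = fun _ => (0:F) by funext a; split_ifs <;> ring]
    exact Matrix.diagonal_zero
  have q22 : Q2mat F n * Q2mat F n = Q2mat F n := by
    rw [Q2mat, Matrix.diagonal_mul_diagonal]
    rw [show (fun a : Fin (2*n) => (if (a:ℕ) < n then (0:F) else 1) * (if (a:ℕ) < n then 0 else 1))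
      = fun a : Fin (2*n) => if (a:ℕ) < n then (0:F) else 1 by funext a; split_ifs <;> ring]
  rw [q11, q12, q21, q22, JJ, KK, kron_zero_left, kron_zero_left]
  have hsum : kron (Q1mat F n) (1 : Matrix (Fin (2*m)) (Fin (2*m)) F)
      + kron (Q2mat F n) 1 = 1 := by
    rw [← kron_add_left]
    rw [show Q1mat F n + Q2mat F n = (1 : Matrix (Fin (2*n)) (Fin (2*n)) F) by
      rw [Q1mat, Q2mat, Matrix.diagonal_add]
      rw [show (fun a : Fin (2*n) => (if (a:ℕ) < n then (1:F) else 0) + (if (a:ℕ) < n then 0 else 1))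
        = fun _ => (1:F) by funext a; split_ifs <;> ring]
      exact Matrix.diagonal_one]
    exact kron_one_one
  rw [← hsum]; abel

lemma sumB {m : ℕ} (hm : 1 ≤ m) :
    ∑ k ∈ Finset.range m,
      (Eunit F (2*m) (k+1) (m+1-(k+1)) - Eunit F (2*m) (m+(k+1)) (2*m+1-(k+1))) = Mm F m := by
  ext r c
  rw [Matrix.sum_apply]
  by_cases hr : (r:ℕ) < m
  · rw [Finset.sum_eq_single (r:ℕ)]
    · simp only [Eunit, Mm, Matrix.sub_apply, true_and, and_true]
      split_ifs <;> (try ring) <;> (exfalso; omega)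
    · intro b _ hb
      simp only [Eunit, Matrix.sub_apply, true_and, and_true]
      split_ifs <;> (try ring) <;> (exfalso; omega)
    · intro h; exact absurd (Finset.mem_range.mpr hr) h
  · have hr2 : (r:ℕ) < 2*m := r.2
    rw [Finset.sum_eq_single ((r:ℕ)-m)]
    · simp only [Eunit, Mm, Matrix.sub_apply, true_and, and_true]
      split_ifs <;> (try ring) <;> (exfalso; omega)
    · intro b _ hb
      simp only [Eunit, Matrix.sub_apply, true_and, and_true]
      split_ifs <;> (try ring) <;> (exfalso; omega)
    · intro h; exact absurd (Finset.mem_range.mpr (by omega)) h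

lemma idx1 {n m i k : ℕ} (hi : 1 ≤ i) (hin : i ≤ n) (hk : 1 ≤ k) (hkm : k ≤ m) :
    2*m*((2*n+1-i)-1) + (m+1-k) = (2*n)*(2*m)+1-(2*m*(i-1)+m+k) := by
  obtain ⟨i', rfl⟩ : ∃ i', i = i'+1 := ⟨i-1, by omega⟩
  obtain ⟨r, rfl⟩ : ∃ r, n = i'+1+r := ⟨n-(i'+1), by omega⟩
  obtain ⟨k', rfl⟩ : ∃ k', k = k'+1 := ⟨k-1, by omega⟩
  obtain ⟨u, rfl⟩ : ∃ u, m = k'+1+u := ⟨m-(k'+1), by omega⟩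
  rw [show 2*(i'+1+r)+1-(i'+1)-1 = i'+2*r+1 from by omega,
    show (k'+1+u)+1-(k'+1) = u+1 from by omega,
    show (i'+1)-1 = i' from by omega]
  symm
  apply Nat.sub_eq_of_eq_add
  ring

lemma idx2 {n m i k : ℕ} (hi : 1 ≤ i) (hin : i ≤ n) (hk : 1 ≤ k) (hkm : k ≤ m) :
    2*m*((2*n+1-i)-1) + (2*m+1-k) = (2*n)*(2*m)+1-(2*m*(i-1)+k) := by
  obtain ⟨i', rfl⟩ : ∃ i', i = i'+1 := ⟨i-1, by omega⟩
  obtain ⟨r, rfl⟩ : ∃ r, n = i'+1+r := ⟨n-(i'+1), by omega⟩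
  obtain ⟨k', rfl⟩ : ∃ k', k = k'+1 := ⟨k-1, by omega⟩
  obtain ⟨u, rfl⟩ : ∃ u, m = k'+1+u := ⟨m-(k'+1), by omega⟩
  rw [show 2*(i'+1+r)+1-(i'+1)-1 = i'+2*r+1 from by omega,
    show 2*(k'+1+u)+1-(k'+1) = k'+2*u+2 from by omega,
    show (i'+1)-1 = i' from by omega]
  symm
  apply Nat.sub_eq_of_eq_add
  ring

lemma prod_one_add {d : ℕ} (N : ℕ → Matrix (Fin d) (Fin d) F) (t : F)
    (h : ∀ j k, N j * N k = 0) (m : ℕ) :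
    ((List.range m).map (fun k => 1 + t • N (k+1))).prod
      = 1 + t • ∑ k ∈ Finset.range m, N (k+1) := by
  induction m with
  | zero => simp
  | succ m ih =>
    rw [List.range_succ, List.map_append, List.prod_append, ih]
    simp only [List.map_cons, List.map_nil, List.prod_cons, List.prod_nil, mul_one]
    have hS : (∑ k ∈ Finset.range m, N (k+1)) * N (m+1) = 0 := by
      rw [Finset.sum_mul]; exact Finset.sum_eq_zero fun k _ => h _ _
    rw [Finset.sum_range_succ, mul_add, mul_one, add_mul, one_mul,
      Matrix.smul_mul, Matrix.mul_smul, hS]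
    simp [smul_add]
    abel

end Aux2

/-- the image `ρ_SP(x_{2e_i}(t), I) = P⁻¹ · (x_{2e_i}(t) ⊗ I_{2m}) · P` of
the conjugated Kronecker tensor product map `Sp_{2n} × Sp_{2m} → SO_{4nm}` equals the
product `∏_{k=1}^{m} x_{e_{2m(i−1)+k} + e_{2m(i−1)+m+k}}(t)` of orthogonal Chevalley
generators of `M_{4nm}(F)`, whose factors pairwise commute. -/
theorem conj_kron_sp_long_generator (F : Type*) [Field F] (n m : ℕ)
    (hn : 1 ≤ n) (hm : 1 ≤ m) (i : ℕ) (hi : 1 ≤ i) (hin : i ≤ n) (t : F) :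
    let D := (2*n)*(2*m)
    let f : ℕ → Matrix (Fin D) (Fin D) F :=
      fun k => xDadd F D (2*m*(i-1)+k) (2*m*(i-1)+m+k) t
    (Pmat F n m)⁻¹ * kron (xClong F n i t) (1 : Matrix (Fin (2*m)) (Fin (2*m)) F)
        * Pmat F n m
        = ((List.range m).map (fun k => f (k+1))).prod ∧
    ∀ k ∈ Finset.Icc 1 m, ∀ k' ∈ Finset.Icc 1 m, Commute (f k) (f k') := by
  intro D f
  set E := Eunit F (2*n) i (2*n+1-i) with hE
  have hEE : E * E = 0 := Eunit_mul_ne (by omega)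
  set N : ℕ → Matrix (Fin ((2*n)*(2*m))) (Fin ((2*n)*(2*m))) F :=
    fun k => kron E (Eunit F (2*m) k (m+1-k) - Eunit F (2*m) (m+k) (2*m+1-k)) with hNdef
  have hNN : ∀ j k, N j * N k = 0 := by
    intro j k
    rw [hNdef]
    simp only
    rw [kron_mul, hEE, kron_zero_left]
  have hf : ∀ k, 1 ≤ k → k ≤ m → f k = 1 + t • N k := by
    intro k h1 h2
    show xDadd F ((2*n)*(2*m)) (2*m*(i-1)+k) (2*m*(i-1)+m+k) t = _
    rw [xDadd, hNdef]
    simp only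
    rw [kron_sub_right,
      kron_Eunit hm hi (by omega) h1 (by omega) (by omega) (by omega),
      kron_Eunit hm hi (by omega) (by omega) (by omega) (by omega) (by omega),
      show 2*m*(i-1)+(m+k) = 2*m*(i-1)+m+k from by omega,
      show 2*m*((2*n+1-i)-1)+(m+1-k) = (2*n)*(2*m)+1-(2*m*(i-1)+m+k) from idx1 hi hin h1 h2,
      show 2*m*((2*n+1-i)-1)+(2*m+1-k) = (2*n)*(2*m)+1-(2*m*(i-1)+k) from idx2 hi hin h1 h2]
  have hP : Pmat F n m * Pmat F n m = 1 := PP hn hm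
  have hPinv : (Pmat F n m)⁻¹ = Pmat F n m := Matrix.inv_eq_left_inv hP
  constructor
  · rw [hPinv]
    have hx : kron (xClong F n i t) (1 : Matrix (Fin (2*m)) (Fin (2*m)) F)
        = 1 + t • kron E (1 : Matrix (Fin (2*m)) (Fin (2*m)) F) := by
      rw [xClong, kron_add_left, kron_smul_left, kron_one_one, hE]
    rw [hx, mul_add, mul_one, add_mul, hP, Matrix.mul_smul, Matrix.smul_mul]
    have hmid : Pmat F n m * kron E 1 * Pmat F n m = kron E (Jm F m * Km F m) := by
      have hQ1E : Q1mat F n * E = E := by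
        ext p q
        rw [hE, Q1mat, Matrix.diagonal_mul]
        simp only [Eunit]
        split_ifs <;> (try ring) <;> (exfalso; omega)
      have hQ2E : Q2mat F n * E = 0 := by
        ext p q
        rw [hE, Q2mat, Matrix.diagonal_mul]
        simp only [Eunit, Matrix.zero_apply]
        split_ifs <;> (try ring) <;> (exfalso; omega)
      have hEQ1 : E * Q1mat F n = 0 := by
        ext p q
        rw [hE, Q1mat, Matrix.mul_diagonal]
        simp only [Eunit, Matrix.zero_apply]
        split_ifs <;> (try ring) <;> (exfalso; omega)
      have hEQ2 : E * Q2mat F n = E := by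
        ext p q
        rw [hE, Q2mat, Matrix.mul_diagonal]
        simp only [Eunit]
        split_ifs <;> (try ring) <;> (exfalso; omega)
      rw [Pmat_eq hn hm, add_mul, kron_mul, kron_mul, mul_one, mul_one, hQ1E, hQ2E,
        kron_zero_left, add_zero, mul_add, kron_mul, kron_mul, hEQ1, hEQ2,
        kron_zero_left, zero_add]
    have hmc : (List.range m).map (fun k => f (k+1))
        = (List.range m).map (fun k => 1 + t • N (k+1)) := by
      apply List.map_congr_left
      intro a ha
      exact hf (a+1) (by omega) (by have := List.mem_range.mp ha; omega)
    rw [hmid, JK, ← sumB hm, kron_sum_right, hmc, prod_one_add N t hNN m, hNdef]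
  · intro k hk k' hk'
    simp only [Finset.mem_Icc] at hk hk'
    rw [hf k hk.1 hk.2, hf k' hk'.1 hk'.2]
    show _ * _ = _ * _
    rw [mul_add, mul_one, add_mul, one_mul, mul_add, mul_one, add_mul, one_mul,
      Matrix.smul_mul, Matrix.mul_smul, Matrix.smul_mul, Matrix.mul_smul, hNN, hNN]
    abel
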